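/- Let a ∈ R^n be a fixed vector and let X_1, ..., X_n be standard Gaussian random variables (possibly dependent). For any 1 ≤ p ≤ 2, there exists a constant C_p > 1 depending only on p such that with probability at least 0.99, (Σ_{i=1}^n |a_i X_i|^p)^(1/p) lies in the interval [C_p^{-1} ‖a‖_p, C_p ‖a‖_p]. -/

import Mathlib

open MeasureTheory ProbabilityTheory Finset Real
open scoped ENNReal NNReal

lemma sqrt_two_pi_ge : (2:ℝ) ≤ √(2*π) := by
  have h4 : (4:ℝ) ≤ 2*π := by nlinarith [Real.pi_gt_three]
  calc (2:ℝ) = √4 := by rw [show (4:ℝ) = 2^2 by norm_num, Real.sqrt_sq]; norm_num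
  _ ≤ √(2*π) := Real.sqrt_le_sqrt h4

lemma pdf_le_half (x : ℝ) : gaussianPDFReal 0 1 x ≤ 1/2 := by
  rw [gaussianPDFReal]
  have he : rexp (-(x - 0)^2 / (2 * ((1:NNReal):ℝ))) ≤ 1 := by
    rw [Real.exp_le_one_iff]
    push_cast
    nlinarith [sq_nonneg (x - 0)]
  have h2 : (√(2*π*((1:NNReal):ℝ)))⁻¹ ≤ 1/2 := by
    rw [inv_le_comm₀ (by positivity) (by norm_num)]
    simpa using sqrt_two_pi_ge
  exact le_trans (mul_le_of_le_one_right (by positivity) he) h2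

lemma gauss_small : (gaussianReal 0 1) {x : ℝ | |x| < 1/400} ≤ ENNReal.ofReal (1/400) := by
  rw [gaussianReal_apply 0 one_ne_zero]
  calc ∫⁻ x in {x : ℝ | |x| < 1/400}, gaussianPDF 0 1 x
      ≤ ∫⁻ _ in {x : ℝ | |x| < 1/400}, ENNReal.ofReal (1/2) := by
        refine lintegral_mono fun x => ?_
        exact ENNReal.ofReal_le_ofReal (pdf_le_half x)
  _ = ENNReal.ofReal (1/2) * volume {x : ℝ | |x| < 1/400} := by
        rw [setLIntegral_const]
  _ ≤ ENNReal.ofReal (1/400) := by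
        have h : {x : ℝ | |x| < 1/400} = Set.Ioo (-(1/400)) (1/400) := by
          ext x; simp [abs_lt]
        rw [h, Real.volume_Ioo, ← ENNReal.ofReal_mul (by norm_num)]
        exact ENNReal.ofReal_le_ofReal (by norm_num)
lemma abs_rpow_le_exp {p : ℝ} (hp : 1 ≤ p) (hp2 : p ≤ 2) (x : ℝ) :
    |x| ^ p ≤ 5 * rexp (x^2 / 4) := by
  have h1 : |x| ^ p ≤ 1 + x^2 := by
    rcases le_or_gt (|x|) 1 with h | h
    · calc |x|^p ≤ 1 := Real.rpow_le_one (abs_nonneg x) h (by linarith)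
      _ ≤ 1 + x^2 := by nlinarith [sq_nonneg x]
    · calc |x|^p ≤ |x|^(2:ℝ) := Real.rpow_le_rpow_of_exponent_le h.le hp2
      _ = x^2 := by rw [show ((2:ℝ) = ((2:ℕ):ℝ)) by norm_num, Real.rpow_natCast, sq_abs]
      _ ≤ 1 + x^2 := by linarith
  have h2 : 1 + x^2 ≤ 5 * rexp (x^2/4) := by
    have ha := Real.add_one_le_exp (x^2/4)
    have he : 1 ≤ rexp (x^2/4) := Real.one_le_exp (by positivity)
    nlinarith
  linarith

lemma pdf_mul_le {p : ℝ} (hp : 1 ≤ p) (hp2 : p ≤ 2) (x : ℝ) :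
    gaussianPDFReal 0 1 x * |x| ^ p ≤ (√(2*π))⁻¹ * (5 * rexp (-(4⁻¹:ℝ) * x^2)) := by
  rw [gaussianPDFReal]
  have e1 : (√(2*π*((1:NNReal):ℝ)))⁻¹ = (√(2*π))⁻¹ := by norm_num
  have e2 : -(x-0)^2/(2*((1:NNReal):ℝ)) = -x^2/2 := by push_cast; ring
  rw [e1, e2, mul_assoc]
  refine mul_le_mul_of_nonneg_left ?_ (by positivity)
  calc rexp (-x^2/2) * |x|^p ≤ rexp (-x^2/2) * (5 * rexp (x^2/4)) :=
        mul_le_mul_of_nonneg_left (abs_rpow_le_exp hp hp2 x) (Real.exp_pos _).le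
  _ = 5 * (rexp (-x^2/2) * rexp (x^2/4)) := by ring
  _ = 5 * rexp (-(4⁻¹:ℝ) * x^2) := by rw [← Real.exp_add]; congr 1; ring

lemma gauss_moment {p : ℝ} (hp : 1 ≤ p) (hp2 : p ≤ 2) :
    ∫⁻ x, ENNReal.ofReal (|x| ^ p) ∂(gaussianReal 0 1) ≤ 8 := by
  have hmeas : Measurable fun x : ℝ => ENNReal.ofReal (|x| ^ p) :=
    (measurable_id.abs.pow_const p).ennreal_ofReal
  rw [gaussianReal_of_var_ne_zero 0 one_ne_zero,
    lintegral_withDensity_eq_lintegral_mul _ (measurable_gaussianPDF 0 1) hmeas]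
  have hint : Integrable (fun x : ℝ => (√(2*π))⁻¹ * (5 * rexp (-(4⁻¹:ℝ) * x^2))) := by
    exact (((integrable_exp_neg_mul_sq (by norm_num : (0:ℝ) < 4⁻¹)).const_mul 5).const_mul _)
  calc ∫⁻ x, (gaussianPDF 0 1 * fun x => ENNReal.ofReal (|x| ^ p)) x
      ≤ ∫⁻ x, ENNReal.ofReal ((√(2*π))⁻¹ * (5 * rexp (-(4⁻¹:ℝ) * x^2))) := by
        refine lintegral_mono fun x => ?_
        simp only [Pi.mul_apply, gaussianPDF]
        rw [← ENNReal.ofReal_mul (gaussianPDFReal_nonneg 0 1 x)]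
        exact ENNReal.ofReal_le_ofReal (pdf_mul_le hp hp2 x)
  _ = ENNReal.ofReal (∫ x, (√(2*π))⁻¹ * (5 * rexp (-(4⁻¹:ℝ) * x^2))) := by
        rw [ofReal_integral_eq_lintegral_ofReal hint]
        exact ae_of_all _ fun x => by positivity
  _ ≤ 8 := by
        rw [integral_const_mul, integral_const_mul, integral_gaussian]
        have h4 : (π / (4⁻¹:ℝ)) = 2 * (2 * π) := by ring
        have hs2 : √(2:ℝ) ≤ 1.6 := by
          rw [show (1.6:ℝ) = √(1.6^2) from (Real.sqrt_sq (by norm_num)).symm]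
          exact Real.sqrt_le_sqrt (by norm_num)
        have hval : (√(2*π))⁻¹ * (5 * √(π / 4⁻¹)) = 5 * √2 := by
          rw [h4, Real.sqrt_mul (by norm_num : (0:ℝ) ≤ 2)]
          have hpos : (0:ℝ) < √(2*π) := Real.sqrt_pos.mpr (by positivity)
          field_simp
          rw [Real.sq_sqrt (by norm_num : (0:ℝ) ≤ 2),
            Real.sqrt_mul (by positivity), Real.sqrt_sq (by norm_num)]
        rw [hval, show (8:ℝ≥0∞) = ENNReal.ofReal 8 by simp]
        exact ENNReal.ofReal_le_ofReal (by nlinarith)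

/-- For possibly dependent standard Gaussians `X i`, the weighted `ℓ_p` sum
`(∑ |a_i X_i|^p)^{1/p}` is within a constant factor (depending only on `p`)
of `‖a‖_p` with probability at least 0.99. -/
theorem weighted_gaussian_pnorm (p : ℝ) (hp : 1 ≤ p) (hp2 : p ≤ 2) :
    ∃ C : ℝ, 1 < C ∧
      ∀ {Ω : Type} {mΩ : MeasurableSpace Ω} (μ : Measure Ω), IsProbabilityMeasure μ →
        ∀ (n : ℕ) (a : Fin n → ℝ) (X : Fin n → Ω → ℝ),
          (∀ i, Measure.map (X i) μ = gaussianReal 0 1) →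
          ENNReal.ofReal 0.99 ≤
            μ {ω | (∑ i, |a i * X i ω| ^ p) ^ (1 / p) ∈
                Set.Icc (C⁻¹ * (∑ i, |a i| ^ p) ^ (1 / p))
                        (C * (∑ i, |a i| ^ p) ^ (1 / p))} := by
  refine ⟨1600, by norm_num, ?_⟩
  intro Ω mΩ μ hμ n a X hX
  have hp0 : (0:ℝ) < p := lt_of_lt_of_le one_pos hp
  have hpne : p ≠ 0 := ne_of_gt hp0
  have h1p : 1/p ≤ 1 := by rw [div_le_one hp0]; exact hp
  have h1p0 : (0:ℝ) ≤ 1/p := by positivity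
  set A : ℝ := ∑ i, |a i| ^ p with hA
  have hA0 : (0:ℝ) ≤ A := Finset.sum_nonneg fun i _ => Real.rpow_nonneg (abs_nonneg _) _
  by_cases hAz : A = 0
  · -- degenerate case : all a i = 0
    have hai : ∀ i, a i = 0 := by
      intro i
      have h0 := (Finset.sum_eq_zero_iff_of_nonneg
        (fun i _ => Real.rpow_nonneg (abs_nonneg (a i)) p)).mp hAz i (mem_univ i)
      have h2 : |a i| = 0 := by
        by_contra h
        exact h (((Real.rpow_eq_zero (abs_nonneg _) hpne).mp h0))
      simpa using h2
    have hset : {ω | (∑ i, |a i * X i ω| ^ p) ^ (1 / p) ∈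
        Set.Icc ((1600:ℝ)⁻¹ * A ^ (1 / p)) (1600 * A ^ (1 / p))} = Set.univ := by
      ext ω
      simp only [Set.mem_setOf_eq, Set.mem_univ, iff_true]
      have hz : ∀ i ∈ univ, |a i * X i ω| ^ p = (0:ℝ) := fun i _ => by
        rw [hai i, zero_mul, abs_zero, Real.zero_rpow hpne]
      rw [Finset.sum_congr rfl hz, Finset.sum_const, smul_zero, hAz,
        Real.zero_rpow (one_div_ne_zero hpne)]
      simp
    rw [hset, measure_univ]
    exact ENNReal.ofReal_le_one.mpr (by norm_num)
  have hApos : 0 < A := lt_of_le_of_ne hA0 (Ne.symm hAz)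
  -- measurability
  have hXae : ∀ i, AEMeasurable (X i) μ := by
    intro i
    by_contra h
    have h0 := Measure.map_of_not_aemeasurable h
    rw [hX i] at h0
    exact (IsProbabilityMeasure.ne_zero (gaussianReal 0 1)) h0
  have hsm : MeasurableSet {x : ℝ | |x| < 1/400} := by
    have h : {x : ℝ | |x| < 1/400} = Set.Ioo (-(1/400)) (1/400) := by ext x; simp [abs_lt]
    rw [h]; exact measurableSet_Ioo
  set F : Ω → ℝ≥0∞ := fun ω => ∑ i, ENNReal.ofReal (|a i * X i ω| ^ p) with hF
  set G : Ω → ℝ≥0∞ := fun ω =>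
    ∑ i, ENNReal.ofReal (|a i| ^ p) * Set.indicator {x : ℝ | |x| < 1/400} 1 (X i ω) with hG
  have hmF : ∀ i, AEMeasurable (fun ω => ENNReal.ofReal (|a i * X i ω| ^ p)) μ := fun i =>
    (((measurable_id.const_mul (a i)).abs.pow_const p).ennreal_ofReal).comp_aemeasurable (hXae i)
  have hFm : AEMeasurable F μ := Finset.aemeasurable_fun_sum univ fun i _ => hmF i
  have hmG : ∀ i, AEMeasurable
      (fun ω => ENNReal.ofReal (|a i| ^ p) * Set.indicator {x : ℝ | |x| < 1/400} 1 (X i ω)) μ :=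
    fun i => ((measurable_one.indicator hsm).comp_aemeasurable (hXae i)).const_mul _
  have hGm : AEMeasurable G μ := Finset.aemeasurable_fun_sum univ fun i _ => hmG i
  -- integral bounds
  have hFint : ∫⁻ ω, F ω ∂μ ≤ ENNReal.ofReal (1600 * A) * ENNReal.ofReal (1/200) := by
    rw [hF, lintegral_finset_sum' univ fun i _ => hmF i]
    have hterm : ∀ i ∈ univ, ∫⁻ ω, ENNReal.ofReal (|a i * X i ω| ^ p) ∂μ
        ≤ ENNReal.ofReal (|a i| ^ p) * 8 := by
      intro i _
      have hg : Measurable fun x : ℝ => ENNReal.ofReal (|a i * x| ^ p) :=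
        ((measurable_id.const_mul (a i)).abs.pow_const p).ennreal_ofReal
      have e1 : ∫⁻ ω, ENNReal.ofReal (|a i * X i ω| ^ p) ∂μ
          = ∫⁻ x, ENNReal.ofReal (|a i * x| ^ p) ∂(Measure.map (X i) μ) :=
        (lintegral_map' hg.aemeasurable (hXae i)).symm
      rw [e1, hX i]
      have e2 : ∀ x : ℝ, ENNReal.ofReal (|a i * x| ^ p)
          = ENNReal.ofReal (|a i| ^ p) * ENNReal.ofReal (|x| ^ p) := by
        intro x
        rw [abs_mul, Real.mul_rpow (abs_nonneg _) (abs_nonneg _),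
          ENNReal.ofReal_mul (Real.rpow_nonneg (abs_nonneg _) _)]
      simp_rw [e2]
      rw [lintegral_const_mul' _ _ ENNReal.ofReal_ne_top]
      exact mul_le_mul_right (gauss_moment hp hp2) _
    calc ∑ i, ∫⁻ ω, ENNReal.ofReal (|a i * X i ω| ^ p) ∂μ
        ≤ ∑ i, ENNReal.ofReal (|a i| ^ p) * 8 := Finset.sum_le_sum hterm
    _ = (∑ i, ENNReal.ofReal (|a i| ^ p)) * 8 := (Finset.sum_mul _ _ _).symm
    _ = ENNReal.ofReal (1600 * A) * ENNReal.ofReal (1/200) := by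
        rw [show ((8:ℝ≥0∞)) = ENNReal.ofReal 8 by simp,
          ← ENNReal.ofReal_sum_of_nonneg fun i _ => Real.rpow_nonneg (abs_nonneg _) _,
          ← hA, ← ENNReal.ofReal_mul hA0,
          ← ENNReal.ofReal_mul (by positivity : (0:ℝ) ≤ 1600 * A)]
        congr 1
        ring
  have hGint : ∫⁻ ω, G ω ∂μ ≤ ENNReal.ofReal (A/2) * ENNReal.ofReal (1/200) := by
    rw [hG, lintegral_finset_sum' univ fun i _ => hmG i]
    have hterm : ∀ i ∈ univ,
        ∫⁻ ω, ENNReal.ofReal (|a i| ^ p) * Set.indicator {x : ℝ | |x| < 1/400} 1 (X i ω) ∂μ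
        ≤ ENNReal.ofReal (|a i| ^ p) * ENNReal.ofReal (1/400) := by
      intro i _
      rw [lintegral_const_mul' _ _ ENNReal.ofReal_ne_top]
      refine mul_le_mul_right ?_ _
      have e1 : ∫⁻ ω, Set.indicator {x : ℝ | |x| < 1/400} 1 (X i ω) ∂μ
          = ∫⁻ x, Set.indicator {x : ℝ | |x| < 1/400} 1 x ∂(Measure.map (X i) μ) :=
        (lintegral_map' (measurable_one.indicator hsm).aemeasurable (hXae i)).symm
      rw [e1, hX i, lintegral_indicator_one hsm]
      exact gauss_small
    calc ∑ i, ∫⁻ ω, ENNReal.ofReal (|a i| ^ p) * Set.indicator {x : ℝ | |x| < 1/400} 1 (X i ω) ∂μ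
        ≤ ∑ i, ENNReal.ofReal (|a i| ^ p) * ENNReal.ofReal (1/400) := Finset.sum_le_sum hterm
    _ = (∑ i, ENNReal.ofReal (|a i| ^ p)) * ENNReal.ofReal (1/400) := (Finset.sum_mul _ _ _).symm
    _ = ENNReal.ofReal (A/2) * ENNReal.ofReal (1/200) := by
        rw [← ENNReal.ofReal_sum_of_nonneg fun i _ => Real.rpow_nonneg (abs_nonneg _) _,
          ← hA, ← ENNReal.ofReal_mul hA0,
          ← ENNReal.ofReal_mul (by positivity : (0:ℝ) ≤ A/2)]
        congr 1
        ring
  -- Markov bounds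
  set B1 : Set Ω := {ω | ENNReal.ofReal (1600 * A) ≤ F ω} with hB1def
  set B2 : Set Ω := {ω | ENNReal.ofReal (A/2) ≤ G ω} with hB2def
  have hB1 : μ B1 ≤ ENNReal.ofReal (1/200) := by
    have hm := mul_meas_ge_le_lintegral₀ hFm (ENNReal.ofReal (1600 * A))
    have hne : ENNReal.ofReal (1600 * A) ≠ 0 :=
      ne_of_gt (ENNReal.ofReal_pos.mpr (by positivity))
    exact (ENNReal.mul_le_mul_iff_right hne ENNReal.ofReal_ne_top).mp (le_trans hm hFint)
  have hB2 : μ B2 ≤ ENNReal.ofReal (1/200) := by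
    have hm := mul_meas_ge_le_lintegral₀ hGm (ENNReal.ofReal (A/2))
    have hne : ENNReal.ofReal (A/2) ≠ 0 :=
      ne_of_gt (ENNReal.ofReal_pos.mpr (by positivity))
    exact (ENNReal.mul_le_mul_iff_right hne ENNReal.ofReal_ne_top).mp (le_trans hm hGint)
  -- good event
  set E : Set Ω := {ω | (∑ i, |a i * X i ω| ^ p) ^ (1 / p) ∈
      Set.Icc ((1600:ℝ)⁻¹ * A ^ (1 / p)) (1600 * A ^ (1 / p))} with hEdef
  have hsub : (B1 ∪ B2)ᶜ ⊆ E := by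
    intro ω hω
    rw [Set.mem_compl_iff, Set.mem_union] at hω
    push_neg at hω
    obtain ⟨hω1, hω2⟩ := hω
    rw [hB1def, Set.mem_setOf_eq, not_le] at hω1
    rw [hB2def, Set.mem_setOf_eq, not_le] at hω2
    set S : ℝ := ∑ i, |a i * X i ω| ^ p with hS
    have hS0 : (0:ℝ) ≤ S := Finset.sum_nonneg fun i _ => Real.rpow_nonneg (abs_nonneg _) _
    -- upper bound
    have hFω : F ω = ENNReal.ofReal S := by
      rw [hF, hS, ENNReal.ofReal_sum_of_nonneg fun i _ => Real.rpow_nonneg (abs_nonneg _) _]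
    rw [hFω, ENNReal.ofReal_lt_ofReal_iff_of_nonneg hS0] at hω1
    have hupper : S ^ (1/p) ≤ 1600 * A ^ (1/p) := by
      calc S ^ (1/p) ≤ (1600 * A) ^ (1/p) := Real.rpow_le_rpow hS0 hω1.le h1p0
      _ = (1600:ℝ) ^ (1/p) * A ^ (1/p) := Real.mul_rpow (by norm_num) hA0
      _ ≤ 1600 * A ^ (1/p) := by
          refine mul_le_mul_of_nonneg_right ?_ (Real.rpow_nonneg hA0 _)
          calc (1600:ℝ) ^ (1/p) ≤ (1600:ℝ) ^ (1:ℝ) :=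
                Real.rpow_le_rpow_of_exponent_le (by norm_num) h1p
          _ = 1600 := Real.rpow_one _
    -- lower bound
    have hGω : G ω = ENNReal.ofReal (∑ i ∈ univ.filter (fun i => |X i ω| < 1/400), |a i| ^ p) := by
      simp only [hG]
      have e : ∀ i ∈ univ,
          ENNReal.ofReal (|a i| ^ p) * Set.indicator {x : ℝ | |x| < 1/400} 1 (X i ω)
          = if |X i ω| < 1/400 then ENNReal.ofReal (|a i| ^ p) else 0 := by
        intro i _
        by_cases h : |X i ω| < 1/400 <;> simp [Set.indicator, h]
      rw [Finset.sum_congr rfl e, ← Finset.sum_filter,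
        ENNReal.ofReal_sum_of_nonneg fun i _ => Real.rpow_nonneg (abs_nonneg _) _]
    rw [hGω, ENNReal.ofReal_lt_ofReal_iff (by positivity)] at hω2
    have hcompl : A/2 ≤ ∑ i ∈ univ.filter (fun i => ¬ |X i ω| < 1/400), |a i| ^ p := by
      have hsplit := Finset.sum_filter_add_sum_filter_not univ
        (fun i => |X i ω| < 1/400) (fun i => |a i| ^ p)
      rw [← hA] at hsplit
      linarith
    have hSlb : (1/400:ℝ) ^ p * (A/2) ≤ S := by
      calc (1/400:ℝ) ^ p * (A/2)
          ≤ (1/400:ℝ) ^ p * ∑ i ∈ univ.filter (fun i => ¬ |X i ω| < 1/400), |a i| ^ p :=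
            mul_le_mul_of_nonneg_left hcompl (Real.rpow_nonneg (by norm_num) _)
      _ = ∑ i ∈ univ.filter (fun i => ¬ |X i ω| < 1/400), (1/400:ℝ) ^ p * |a i| ^ p :=
            Finset.mul_sum _ _ _
      _ ≤ ∑ i ∈ univ.filter (fun i => ¬ |X i ω| < 1/400), |a i * X i ω| ^ p := by
            refine Finset.sum_le_sum fun i hi => ?_
            have hx : (1/400:ℝ) ≤ |X i ω| := not_lt.mp (Finset.mem_filter.mp hi).2
            rw [abs_mul, Real.mul_rpow (abs_nonneg _) (abs_nonneg _)]
            calc (1/400:ℝ) ^ p * |a i| ^ p = |a i| ^ p * (1/400:ℝ) ^ p := mul_comm _ _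
            _ ≤ |a i| ^ p * |X i ω| ^ p := mul_le_mul_of_nonneg_left
                (Real.rpow_le_rpow (by norm_num) hx hp0.le)
                (Real.rpow_nonneg (abs_nonneg _) _)
      _ ≤ S := Finset.sum_le_sum_of_subset_of_nonneg (Finset.filter_subset _ _)
            (fun i _ _ => Real.rpow_nonneg (abs_nonneg _) _)
    have hlower : (1600:ℝ)⁻¹ * A ^ (1/p) ≤ S ^ (1/p) := by
      have h1 : ((1/400:ℝ) ^ p * (A/2)) ^ (1/p) ≤ S ^ (1/p) :=
        Real.rpow_le_rpow (by positivity) hSlb h1p0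
      have h2 : ((1/400:ℝ) ^ p * (A/2)) ^ (1/p)
          = (1/400:ℝ) * ((A/2) ^ (1/p)) := by
        rw [Real.mul_rpow (by positivity) (by positivity),
          ← Real.rpow_mul (by norm_num : (0:ℝ) ≤ 1/400), mul_one_div, div_self hpne,
          Real.rpow_one]
      have hhalf : (1/2:ℝ) ≤ (1/2:ℝ) ^ (1/p) := by
        have h := Real.rpow_le_rpow_of_exponent_ge (by norm_num : (0:ℝ) < 1/2)
          (by norm_num : (1/2:ℝ) ≤ 1) h1p
        rwa [Real.rpow_one] at h
      have hA2 : (A/2:ℝ) ^ (1/p) = A ^ (1/p) * (1/2:ℝ) ^ (1/p) := by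
        rw [show (A/2:ℝ) = A * (1/2) by ring, Real.mul_rpow hA0 (by norm_num)]
      have hAp0 : (0:ℝ) ≤ A ^ (1/p) := Real.rpow_nonneg hA0 _
      calc (1600:ℝ)⁻¹ * A ^ (1/p) ≤ (1/400) * ((A/2) ^ (1/p)) := by
            rw [hA2]; nlinarith
      _ = ((1/400:ℝ) ^ p * (A/2)) ^ (1/p) := h2.symm
      _ ≤ S ^ (1/p) := h1
    rw [hEdef]
    exact Set.mem_Icc.mpr ⟨hlower, hupper⟩
  -- conclude
  have hcover : (Set.univ : Set Ω) ⊆ B1 ∪ B2 ∪ E := by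
    intro ω _
    by_cases h : ω ∈ B1 ∪ B2
    · exact Set.mem_union_left _ h
    · exact Set.mem_union_right _ (hsub h)
  have hle : (1:ℝ≥0∞) ≤ ENNReal.ofReal (1/200) + ENNReal.ofReal (1/200) + μ E := by
    calc (1:ℝ≥0∞) = μ Set.univ := (measure_univ).symm
    _ ≤ μ (B1 ∪ B2 ∪ E) := measure_mono hcover
    _ ≤ μ (B1 ∪ B2) + μ E := measure_union_le _ _
    _ ≤ (μ B1 + μ B2) + μ E := add_le_add (measure_union_le _ _) le_rfl
    _ ≤ ENNReal.ofReal (1/200) + ENNReal.ofReal (1/200) + μ E :=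
        add_le_add (add_le_add hB1 hB2) le_rfl
  have hsum : ENNReal.ofReal 0.99 + (ENNReal.ofReal (1/200) + ENNReal.ofReal (1/200)) = 1 := by
    rw [← ENNReal.ofReal_add (by norm_num) (by norm_num),
      ← ENNReal.ofReal_add (by norm_num) (by norm_num)]
    norm_num
  have hfinal : ENNReal.ofReal 0.99 + (ENNReal.ofReal (1/200) + ENNReal.ofReal (1/200))
      ≤ μ E + (ENNReal.ofReal (1/200) + ENNReal.ofReal (1/200)) := by
    rw [hsum]
    calc (1:ℝ≥0∞) ≤ ENNReal.ofReal (1/200) + ENNReal.ofReal (1/200) + μ E := hle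
    _ = μ E + (ENNReal.ofReal (1/200) + ENNReal.ofReal (1/200)) := by ring
  exact (ENNReal.add_le_add_iff_right
    (ENNReal.add_ne_top.mpr ⟨ENNReal.ofReal_ne_top, ENNReal.ofReal_ne_top⟩)).mp hfinal
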